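/- arXiv:2506.16577 — 8 statements merged into one kernel-verified Lean document; each statement's English description precedes it below -/
import Mathlib

section
/- For every integer g ≥ 2 and every t ≥ 0, the sequences A_t and B_t are equal: A_t = B_t. -/
lemma geo_aux : ∀ m : ℕ, ∑ i ∈ Finset.Icc 1 m, (2:ℤ)^(m+2-i) = 2^(m+2) - 4 := by
  intro m
  induction m with
  | zero => simp
  | succ m ih =>
    rw [Finset.sum_Icc_succ_top (by omega : 1 ≤ m + 1)]
    have h1 : ∀ i ∈ Finset.Icc 1 m, (2:ℤ)^(m+1+2-i) = 2 * 2^(m+2-i) := by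
      intro i hi
      simp only [Finset.mem_Icc] at hi
      have : m + 1 + 2 - i = (m + 2 - i) + 1 := by omega
      rw [this, pow_succ]; ring
    rw [Finset.sum_congr rfl h1, ← Finset.mul_sum, ih]
    have : m + 1 + 2 - (m + 1) = 2 := by omega
    rw [this]; ring_nf

/-- For every integer `g ≥ 2`, the sequence `A` (number of distinct genealogical
ancestors under `(g-1)`th-cousin mating, with `A t = 2^t` for `t ≤ g` and
`A t = 2·A (t-1) − A (t-g)` for `t ≥ g+1`) equals the Fibonacci-like sequence `B`
(with `B t = 2^t` for `t ≤ g` and `B t = (∑_{i=1}^{g-1} B (t-i)) + 2` for `t ≥ g+1`). -/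
theorem A_eq_B (g : ℕ) (hg : 2 ≤ g) (A B : ℕ → ℤ)
    (hA₁ : ∀ t, t ≤ g → A t = 2 ^ t)
    (hA₂ : ∀ t, g + 1 ≤ t → A t = 2 * A (t - 1) - A (t - g))
    (hB₁ : ∀ t, t ≤ g → B t = 2 ^ t)
    (hB₂ : ∀ t, g + 1 ≤ t → B t = (∑ i ∈ Finset.Icc 1 (g - 1), B (t - i)) + 2) :
    ∀ t, A t = B t := by
  -- B satisfies A's recurrence for t ≥ g+2
  have hBrec : ∀ t, g + 2 ≤ t → B t = 2 * B (t - 1) - B (t - g) := by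
    intro t ht
    have h1 : B t = (∑ i ∈ Finset.Icc 1 (g - 1), B (t - i)) + 2 := hB₂ t (by omega)
    have h2 : B (t - 1) = (∑ i ∈ Finset.Icc 1 (g - 1), B (t - 1 - i)) + 2 := by
      rw [hB₂ (t - 1) (by omega)]
    -- reindex the second sum
    have h3 : ∑ i ∈ Finset.Icc 1 (g - 1), B (t - 1 - i)
        = ∑ j ∈ Finset.Icc 2 g, B (t - j) := by
      apply Finset.sum_nbij' (fun i => i + 1) (fun j => j - 1)
      · intro i hi; simp only [Finset.mem_Icc] at *; omega
      · intro j hj; simp only [Finset.mem_Icc] at *; omega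
      · intro i hi; omega
      · intro j hj; simp only [Finset.mem_Icc] at hj; omega
      · intro i hi; congr 1; omega
    -- both splits of ∑_{i∈Icc 1 g} B (t - i)
    have h4 : ∑ i ∈ Finset.Icc 1 g, B (t - i)
        = (∑ i ∈ Finset.Icc 1 (g - 1), B (t - i)) + B (t - g) := by
      have hg' : g - 1 + 1 = g := by omega
      rw [← hg', Finset.sum_Icc_succ_top (by omega : 1 ≤ g - 1 + 1), hg']
    have h5 : ∑ i ∈ Finset.Icc 1 g, B (t - i)
        = B (t - 1) + ∑ j ∈ Finset.Icc 2 g, B (t - j) := by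
      have he : Finset.Icc 2 g = Finset.Ioc 1 g := by ext x; simp; omega
      rw [he, ← Finset.add_sum_Ioc_eq_sum_Icc (by omega : 1 ≤ g)]
    have key : (∑ i ∈ Finset.Icc 1 (g - 1), B (t - i)) + B (t - g)
        = B (t - 1) + ∑ i ∈ Finset.Icc 1 (g - 1), B (t - 1 - i) := by
      rw [h3, ← h4, ← h5]
    linarith [key, h1, h2]
  intro t
  induction t using Nat.strong_induction_on with
  | _ t ih =>
    rcases le_or_gt t g with h | h
    · rw [hA₁ t h, hB₁ t h]
    · rcases eq_or_lt_of_le (show g + 1 ≤ t from h) with h' | h'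
      · -- t = g + 1
        subst h'
        rw [hA₂ (g + 1) le_rfl, hB₂ (g + 1) le_rfl]
        have e1 : g + 1 - 1 = g := by omega
        have e2 : g + 1 - g = 1 := by omega
        rw [e1, e2, hA₁ g le_rfl, hA₁ 1 (by omega)]
        have hsum : ∑ i ∈ Finset.Icc 1 (g - 1), B (g + 1 - i)
            = ∑ i ∈ Finset.Icc 1 (g - 1), (2:ℤ)^(g + 1 - i) := by
          apply Finset.sum_congr rfl
          intro i hi
          simp only [Finset.mem_Icc] at hi
          exact hB₁ _ (by omega)
        rw [hsum]
        have hm : g - 1 + 2 = g + 1 := by omega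
        have := geo_aux (g - 1)
        rw [hm] at this
        rw [this]
        rw [pow_succ]
        ring
      · -- t ≥ g + 2
        have ht : g + 2 ≤ t := h'
        rw [hA₂ t (by omega), hBrec t ht,
          ih (t - 1) (by omega), ih (t - g) (by omega)]
end

section
/- In the case g = 3, for all t ≥ 1 the sequence A_t satisfies A_t = 2·f_{t+2} − 2, where (f_t) is the Fibonacci sequence with f_0 = 0, f_1 = 1, and f_t = f_{t−1} + f_{t−2} for t ≥ 2. -/
/-- In the case `g = 3` (second-cousin mating), the ancestor-count sequence `A`
satisfies `A t = 2·fib (t+2) − 2` for all `t ≥ 1`, where `fib` is the Fibonacci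
sequence with `fib 0 = 0`, `fib 1 = 1`. -/
theorem A_eq_two_fib_sub_two (A : ℕ → ℤ)
    (hA₁ : ∀ t, t ≤ 3 → A t = 2 ^ t)
    (hA₂ : ∀ t, 4 ≤ t → A t = 2 * A (t - 1) - A (t - 3)) :
    ∀ t, 1 ≤ t → A t = 2 * (Nat.fib (t + 2) : ℤ) - 2 := by
  intro t
  induction t using Nat.strong_induction_on with
  | _ t ih =>
    intro ht
    match t, ht with
    | 1, _ => rw [hA₁ 1 (by norm_num)]; norm_num
    | 2, _ => rw [hA₁ 2 (by norm_num)]; norm_num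
    | 3, _ => rw [hA₁ 3 (by norm_num)]; simp [Nat.fib]
    | (n+4), _ =>
      have h1 := ih (n+3) (by omega) (by omega)
      have h3 := ih (n+1) (by omega) (by omega)
      rw [hA₂ (n+4) (by omega)]
      simp only [Nat.add_sub_cancel, show n+4-1 = n+3 by omega, show n+4-3 = n+1 by omega] at *
      rw [h1, h3]
      have e1 : n + 4 + 2 = (n+4) + 2 := rfl
      have : (Nat.fib (n+6) : ℤ) = Nat.fib (n+5) + Nat.fib (n+4) := by
        rw [show n+6 = (n+4)+2 by omega, Nat.fib_add_two]; push_cast; ring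
      have h2 : (Nat.fib (n+5) : ℤ) = Nat.fib (n+4) + Nat.fib (n+3) := by
        rw [show n+5 = (n+3)+2 by omega, Nat.fib_add_two]; push_cast; ring
      rw [show n+4+2 = n+6 by omega, show n+3+2 = n+5 by omega, show n+1+2 = n+3 by omega,
        this, h2]
      ring
end

section
/- For every integer g ≥ 2 and every real number z with |z| < 1/2, the series ∑_{t≥0} A_t z^t converges, 1 − 2z + z^g ≠ 0, and ∑_{t≥0} A_t z^t = (1 + z^g)/(1 − 2z + z^g). -/
/-- For every integer `g ≥ 2` and every real `z` with `|z| < 1/2`, the series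
`∑ A_t z^t` converges, `1 − 2z + z^g ≠ 0`, and the sum equals
`(1 + z^g)/(1 − 2z + z^g)`. -/
theorem genFun_real (g : ℕ) (hg : 2 ≤ g) (A : ℕ → ℤ)
    (hA₁ : ∀ t, t ≤ g → A t = 2 ^ t)
    (hA₂ : ∀ t, g + 1 ≤ t → A t = 2 * A (t - 1) - A (t - g))
    (z : ℝ) (hz : |z| < 1 / 2) :
    1 - 2 * z + z ^ g ≠ 0 ∧
      HasSum (fun t : ℕ => (A t : ℝ) * z ^ t) ((1 + z ^ g) / (1 - 2 * z + z ^ g)) := by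
  have hA0 : A 0 = 1 := by simpa using hA₁ 0 (by omega)
  -- monotonicity
  have hmono : ∀ t, ∀ s, s ≤ t → A s ≤ A t := by
    intro t
    induction t using Nat.strong_induction_on with
    | _ t ih =>
      intro s hs
      rcases Nat.eq_or_lt_of_le hs with rfl | hlt
      · exact le_refl _
      · have ht : 1 ≤ t := by omega
        have h1 : A s ≤ A (t-1) := ih (t-1) (by omega) s (by omega)
        have h2 : A (t-1) ≤ A t := by
          by_cases hgt : t ≤ g
          · rw [hA₁ (t-1) (by omega), hA₁ t hgt]
            exact pow_le_pow_right₀ (by norm_num) (by omega)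
          · rw [hA₂ t (by omega)]
            have h3 : A (t-g) ≤ A (t-1) := ih (t-1) (by omega) (t-g) (by omega)
            linarith
        linarith
  have hpos : ∀ t, 0 ≤ A t := by
    intro t
    have := hmono t 0 (Nat.zero_le _)
    rw [hA0] at this; linarith
  have hbound : ∀ t, A t ≤ 2 ^ t := by
    intro t
    induction t using Nat.strong_induction_on with
    | _ t ih =>
      by_cases hgt : t ≤ g
      · exact le_of_eq (hA₁ t hgt)
      · rw [hA₂ t (by omega)]
        have h1 : A (t-1) ≤ 2 ^ (t-1) := ih (t-1) (by omega)
        have h2 : 0 ≤ A (t-g) := hpos _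
        have h3 : (2:ℤ) ^ t = 2 * 2 ^ (t-1) := by
          rw [← pow_succ']
          congr 1
          omega
        linarith
  set f : ℕ → ℝ := fun t => (A t : ℝ) * z ^ t with hf
  have hsum : Summable f := by
    apply Summable.of_norm_bounded (g := fun t => (2*|z|)^t)
      (summable_geometric_of_lt_one (by positivity) (by linarith))
    intro t
    have : ‖f t‖ = |(A t : ℝ)| * |z| ^ t := by
      rw [hf]; simp [abs_mul, abs_pow]
    rw [this, mul_pow]
    gcongr
    rw [abs_of_nonneg (by exact_mod_cast hpos t)]
    exact_mod_cast hbound t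
  -- denominator positive
  have hzsq : |z| ^ 2 < 1/4 := by nlinarith [abs_nonneg z]
  have hzg : |z ^ g| ≤ |z| ^ 2 := by
    rw [abs_pow]
    exact pow_le_pow_of_le_one (abs_nonneg z) (by linarith) hg
  have hden : 0 < 1 - 2 * z + z ^ g := by
    rcases le_or_gt 0 z with hz0 | hz0
    · have hzlt : z < 1/2 := lt_of_abs_lt hz
      have : 0 ≤ z ^ g := pow_nonneg hz0 g
      linarith
    · have h1 : -(|z|^2) ≤ z ^ g := by
        have := neg_abs_le (z ^ g)
        linarith
      have h2 : 0 < -z := by linarith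
      linarith
  have hne : 1 - 2 * z + z ^ g ≠ 0 := ne_of_gt hden
  refine ⟨hne, ?_⟩
  set S := ∑' t, f t with hSdef
  have h1 : HasSum f S := hsum.hasSum
  -- shifted sums
  set B : ℕ → ℝ := fun t => if t = 0 then 0 else 2 * (A (t-1) : ℝ) * z ^ t with hB
  set C : ℕ → ℝ := fun t => if t < g then 0 else (A (t-g) : ℝ) * z ^ t with hC
  have h2 : HasSum (fun t => B (t + 1)) (2 * z * S) := by
    have := h1.mul_left (2 * z)
    convert this using 2 with t
    · rfl
    rw [hB]
    simp only [Nat.add_sub_cancel, Nat.succ_ne_zero, if_false]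
    ring
  have HB : HasSum B (2 * z * S) := by
    have := (hasSum_nat_add_iff 1).mp h2
    simpa [hB] using this
  have h3 : HasSum (fun t => C (t + g)) (z ^ g * S) := by
    have := h1.mul_left (z ^ g)
    convert this using 2 with t
    · rfl
    rw [hC]
    simp only [Nat.add_sub_cancel, if_neg (by omega : ¬ t + g < g)]
    ring
  have HC : HasSum C (z ^ g * S) := by
    have := (hasSum_nat_add_iff g).mp h3
    have hz0 : ∑ i ∈ Finset.range g, C i = 0 := by
      apply Finset.sum_eq_zero
      intro i hi
      rw [hC]
      simp [Finset.mem_range.mp hi]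
    rw [hz0, add_zero] at this
    exact this
  have hD : HasSum (fun t => f t - B t + C t) (S - 2 * z * S + z ^ g * S) :=
    (h1.sub HB).add HC
  have hD2 : HasSum (fun t => f t - B t + C t) (1 + z ^ g) := by
    have heq : (fun t => f t - B t + C t) =
        fun t => (if t = 0 then (1:ℝ) else 0) + (if t = g then z ^ g else 0) := by
      funext t
      rw [hf, hB, hC]
      by_cases h0 : t = 0
      · subst h0
        simp only [if_pos rfl, if_pos (show 0 < g by omega),
          if_neg (show (0:ℕ) ≠ g by omega), hA0, pow_zero]
        norm_num
      · by_cases hlt : t < g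
        · have hA1t : A t = 2 ^ t := hA₁ t (by omega)
          have hA1t' : A (t - 1) = 2 ^ (t - 1) := hA₁ (t-1) (by omega)
          have hp : (2:ℤ) ^ t = 2 * 2 ^ (t-1) := by
            rw [← pow_succ']; congr 1; omega
          simp only [if_neg h0, if_pos hlt, if_neg (by omega : t ≠ g)]
          rw [hA1t, hA1t', hp]
          push_cast
          ring
        · by_cases hgt : t = g
          · rw [hgt]
            have hA1t : A g = 2 ^ g := hA₁ g le_rfl
            have hA1t' : A (g - 1) = 2 ^ (g - 1) := hA₁ (g-1) (by omega)
            have hp : (2:ℤ) ^ g = 2 * 2 ^ (g-1) := by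
              rw [← pow_succ']; congr 1; omega
            simp only [if_neg (show g ≠ 0 by omega), if_neg (by omega : ¬ g < g),
              if_pos rfl, Nat.sub_self, hA0]
            rw [hA1t, hA1t', hp]
            push_cast
            ring
          · have hrec : A t = 2 * A (t-1) - A (t-g) := hA₂ t (by omega)
            simp only [if_neg h0, if_neg hlt, if_neg hgt]
            rw [hrec]
            push_cast
            ring
    rw [heq]
    exact (hasSum_ite_eq 0 (1:ℝ)).add (hasSum_ite_eq g (z ^ g))
  have hkey : S - 2 * z * S + z ^ g * S = 1 + z ^ g := hD.unique hD2
  have hS : S = (1 + z ^ g) / (1 - 2 * z + z ^ g) := by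
    rw [eq_div_iff hne]
    linarith [hkey]
  rw [← hS]
  exact h1
end

section
/- For every integer g ≥ 2, with n = g − 1, the formal power series identity (1 − X) · (1 − X − X^2 − ⋯ − X^n) · (∑_{t≥0} A_t X^t) = 1 + X^g holds in the ring of formal power series over the integers; that is, the generating function of (A_t) equals (1 + X^g)/[(1 − X)(1 − X − ⋯ − X^n)], exhibiting it as a rational multiple of the n-anacci generating function. -/
open PowerSeries

/-- For every integer `g ≥ 2`, with `n = g − 1`, the generating function of the
ancestor-count sequence `A` satisfies
`(1 − X)·(1 − X − X² − ⋯ − Xⁿ)·(∑ A_t X^t) = 1 + X^g` in `ℤ⟦X⟧`;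
i.e., it is a rational multiple of the `n`-anacci generating function. -/
theorem genFun_nanacci (g : ℕ) (hg : 2 ≤ g) (A : ℕ → ℤ)
    (hA₁ : ∀ t, t ≤ g → A t = 2 ^ t)
    (hA₂ : ∀ t, g + 1 ≤ t → A t = 2 * A (t - 1) - A (t - g)) :
    (1 - (X : PowerSeries ℤ)) * (1 - ∑ i ∈ Finset.Icc 1 (g - 1), (X : PowerSeries ℤ) ^ i) *
      PowerSeries.mk A = 1 + X ^ g := by
  have hset : Finset.range g = insert 0 (Finset.Icc 1 (g - 1)) := by
    ext x; simp only [Finset.mem_range, Finset.mem_insert, Finset.mem_Icc]; omega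
  have hgeom := geom_sum_mul (X : PowerSeries ℤ) g
  have hsum : ∑ i ∈ Finset.range g, (X : PowerSeries ℤ) ^ i
      = 1 + ∑ i ∈ Finset.Icc 1 (g - 1), (X : PowerSeries ℤ) ^ i := by
    rw [hset, Finset.sum_insert (by simp)]
    simp
  have key : (1 - (X : PowerSeries ℤ)) * (1 - ∑ i ∈ Finset.Icc 1 (g - 1), (X : PowerSeries ℤ) ^ i)
      = 1 - 2 * X + X ^ g := by
    have h2 : ∑ i ∈ Finset.Icc 1 (g - 1), (X : PowerSeries ℤ) ^ i
        = (∑ i ∈ Finset.range g, (X : PowerSeries ℤ) ^ i) - 1 := by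
      rw [hsum]; ring
    rw [h2]
    linear_combination hgeom
  rw [key]
  have expand : (1 - 2 * (X : PowerSeries ℤ) + X ^ g) * PowerSeries.mk A
      = PowerSeries.mk A - (X * PowerSeries.mk A + X * PowerSeries.mk A)
        + X ^ g * PowerSeries.mk A := by ring
  rw [expand]
  ext n
  rcases Nat.eq_zero_or_pos n with rfl | hn
  · simp only [map_add, map_sub, coeff_mk, coeff_zero_X_mul, coeff_X_pow_mul',
      coeff_zero_eq_constantCoeff, constantCoeff_one, map_pow, constantCoeff_X]
    rw [hA₁ 0 (by omega)]
    rw [if_neg (by omega)]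
    simp [zero_pow (by omega : g ≠ 0)]
  · obtain ⟨m, rfl⟩ := Nat.exists_eq_add_of_lt hn
    simp only [zero_add, map_add, map_sub, coeff_mk, coeff_succ_X_mul, coeff_X_pow_mul',
      coeff_one, coeff_X_pow, Nat.succ_ne_zero, if_false]
    rcases lt_trichotomy (m + 1) g with h | h | h
    · rw [if_neg (by omega), if_neg (by omega)]
      rw [hA₁ (m + 1) (by omega), hA₁ m (by omega)]
      ring
    · rw [if_pos (by omega), if_pos (by omega)]
      rw [hA₁ (m + 1) (by omega), hA₁ m (by omega), hA₁ (m + 1 - g) (by omega),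
        show m + 1 - g = 0 by omega, show m + 1 = g from h,
        show (2:ℤ) ^ g = 2 * 2 ^ m by rw [← pow_succ']; congr 1; omega]
      ring
    · rw [if_pos (by omega), if_neg (by omega)]
      rw [hA₂ (m + 1) (by omega)]
      simp only [Nat.add_sub_cancel]
      ring
end

section
/- For every integer n ≥ 2, the function Q_n(z) = 1 − z − z^2 − ⋯ − z^n has exactly one real root in the open interval (1/2, 1). -/
/-- For every integer `n ≥ 2`, the function `Q_n(z) = 1 − z − z² − ⋯ − zⁿ`
has exactly one real root in the open interval `(1/2, 1)`. -/
theorem Q_unique_root (n : ℕ) (hn : 2 ≤ n) :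
    ∃! z : ℝ, z ∈ Set.Ioo (1 / 2 : ℝ) 1 ∧ 1 - ∑ i ∈ Finset.Icc 1 n, z ^ i = 0 := by
  set f : ℝ → ℝ := fun z => 1 - ∑ i ∈ Finset.Icc 1 n, z ^ i with hf
  have hc : ContinuousOn f (Set.Icc (1/2 : ℝ) 1) := by
    apply Continuous.continuousOn
    continuity
  -- f (1/2) = (1/2)^n
  have hicc : Finset.Icc 1 n = Finset.Ico 1 (n+1) := by
    ext i; simp [Nat.lt_succ_iff]
  have hsum : ∑ i ∈ Finset.Icc 1 n, ((1:ℝ)/2) ^ i = 1 - (1/2)^n := by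
    rw [hicc, geom_sum_Ico' (by norm_num) (by omega)]
    field_simp
    ring
  have hhalf : f (1/2) > 0 := by
    simp only [hf, hsum]
    have : ((1:ℝ)/2)^n > 0 := by positivity
    linarith
  have hone : f 1 < 0 := by
    simp only [hf]
    have h1 : ∑ i ∈ Finset.Icc 1 n, (1:ℝ) ^ i = n := by simp
    rw [h1]
    have : (2:ℝ) ≤ (n : ℝ) := by exact_mod_cast hn
    linarith
  -- strict anti on (0, ∞) implies injectivity on Ioo
  have hanti : ∀ x y : ℝ, x ∈ Set.Ioo (1/2 : ℝ) 1 → y ∈ Set.Ioo (1/2 : ℝ) 1 →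
      x < y → f y < f x := by
    intro x y hx hy hxy
    have hsumlt : ∑ i ∈ Finset.Icc 1 n, x ^ i < ∑ i ∈ Finset.Icc 1 n, y ^ i := by
      apply Finset.sum_lt_sum
      · intro i hi
        apply pow_le_pow_left₀ (by linarith [hx.1]) (le_of_lt hxy)
      · refine ⟨1, ?_, ?_⟩
        · simp; omega
        · simpa using hxy
    simp only [hf]
    linarith
  obtain ⟨z, hz, hfz⟩ : ∃ z ∈ Set.Ioo (1/2 : ℝ) 1, f z = 0 := by
    have := intermediate_value_Ioo' (by norm_num : (1/2:ℝ) ≤ 1) hc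
    have h0 : (0:ℝ) ∈ Set.Ioo (f 1) (f (1/2)) := ⟨hone, hhalf⟩
    obtain ⟨z, hz, hfz⟩ := this h0
    exact ⟨z, hz, hfz⟩
  refine ⟨z, ⟨hz, hfz⟩, ?_⟩
  intro y ⟨hy, hfy0⟩
  have hfy : f y = 0 := hfy0
  by_contra hne
  rcases lt_or_gt_of_ne hne with h | h
  · have := hanti y z hy hz h
    rw [hfy, hfz] at this; exact lt_irrefl 0 this
  · have := hanti z y hz hy h
    rw [hfy, hfz] at this; exact lt_irrefl 0 this
end

section
/- Let c_1 = 1 and, for n ≥ 2, let c_n be the unique real root of Q_n in (1/2, 1). Then for every n ≥ 1, c_{n+1} < c_n. -/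
/-- Let `c 1 = 1` and, for `n ≥ 2`, let `c n` be the real root of
`Q_n(z) = 1 − z − z² − ⋯ − zⁿ` lying in `(1/2, 1)`.
Then for every `n ≥ 1`, `c (n+1) < c n`. -/
theorem c_strict_anti (c : ℕ → ℝ) (hc1 : c 1 = 1)
    (hc : ∀ n, 2 ≤ n → c n ∈ Set.Ioo (1 / 2 : ℝ) 1 ∧
      1 - ∑ i ∈ Finset.Icc 1 n, (c n) ^ i = 0) :
    ∀ n, 1 ≤ n → c (n + 1) < c n := by
  intro n hn
  rcases eq_or_lt_of_le hn with h1 | h2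
  · have h := (hc 2 (by norm_num)).1.2
    rw [← h1, hc1]
    exact h
  · have hn2 : 2 ≤ n := h2
    obtain ⟨⟨hlo, hhi⟩, heq⟩ := hc n hn2
    obtain ⟨⟨hlo', hhi'⟩, heq'⟩ := hc (n + 1) (by omega)
    by_contra h
    push_neg at h
    have hpos : (0 : ℝ) < c n := lt_trans (by norm_num) hlo
    have hsum : ∑ i ∈ Finset.Icc 1 n, (c n) ^ i = 1 := by linarith
    have hsum' : ∑ i ∈ Finset.Icc 1 (n + 1), (c (n + 1)) ^ i = 1 := by linarith
    have hsplit : ∑ i ∈ Finset.Icc 1 (n + 1), (c n) ^ i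
        = ∑ i ∈ Finset.Icc 1 n, (c n) ^ i + (c n) ^ (n + 1) :=
      Finset.sum_Icc_succ_top (by omega) _
    have hle : ∑ i ∈ Finset.Icc 1 (n + 1), (c n) ^ i
        ≤ ∑ i ∈ Finset.Icc 1 (n + 1), (c (n + 1)) ^ i :=
      Finset.sum_le_sum fun i _ => pow_le_pow_left₀ hpos.le h i
    have : (0 : ℝ) < (c n) ^ (n + 1) := pow_pos hpos _
    rw [hsplit, hsum, hsum'] at hle
    linarith
end

section
/- Let c_n (n ≥ 2) be the unique real root of Q_n in (1/2, 1). Then the sequence (c_n) converges to 1/2 as n → ∞. -/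
open Filter

lemma sum_Icc_pow (x : ℝ) (n : ℕ) :
    ∑ i ∈ Finset.Icc 1 n, x ^ i = (∑ i ∈ Finset.range (n + 1), x ^ i) - 1 := by
  induction n with
  | zero => simp
  | succ n ih =>
      rw [Finset.sum_Icc_succ_top (by omega : 1 ≤ n + 1), ih, Finset.sum_range_succ]
      rw [Finset.sum_range_succ, Finset.sum_range_succ]; ring

/-- For `n ≥ 2`, let `c n` be the real root of `Q_n(z) = 1 − z − z² − ⋯ − zⁿ`
lying in `(1/2, 1)`. Then `c n → 1/2` as `n → ∞`. -/
theorem c_tendsto_half (c : ℕ → ℝ)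
    (hc : ∀ n, 2 ≤ n → c n ∈ Set.Ioo (1 / 2 : ℝ) 1 ∧
      1 - ∑ i ∈ Finset.Icc 1 n, (c n) ^ i = 0) :
    Tendsto c atTop (nhds (1 / 2 : ℝ)) := by
  have key : ∀ n, 2 ≤ n → 1 / 2 ≤ c n ∧ c n ≤ 1 / 2 + (0.7 : ℝ) ^ n := by
    intro n hn
    obtain ⟨⟨h1, h2⟩, heq⟩ := hc n hn
    set x := c n with hx
    have hx0 : (0 : ℝ) < x := by linarith
    -- sum over range (n+1) equals 2
    have hsum : ∑ i ∈ Finset.range (n + 1), x ^ i = 2 := by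
      have := sum_Icc_pow x n
      linarith [heq, this]
    have hgeom : (∑ i ∈ Finset.range (n + 1), x ^ i) * (x - 1) = x ^ (n + 1) - 1 :=
      geom_sum_mul x (n + 1)
    rw [hsum] at hgeom
    have hxval : x = (1 + x ^ (n + 1)) / 2 := by linarith
    -- upper bound x ≤ 0.7
    have hsub : ({1, 2} : Finset ℕ) ⊆ Finset.Icc 1 n := by
      intro i hi
      simp only [Finset.mem_insert, Finset.mem_singleton] at hi
      rcases hi with rfl | rfl <;> simp [Finset.mem_Icc] <;> omega
    have hle : x + x ^ 2 ≤ 1 := by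
      have h12 : ∑ i ∈ ({1, 2} : Finset ℕ), x ^ i = x + x ^ 2 := by
        simp [Finset.sum_insert, pow_one]
      have := Finset.sum_le_sum_of_subset_of_nonneg hsub
        (fun i _ _ => le_of_lt (pow_pos hx0 i))
      rw [h12] at this
      linarith
    have hx7 : x ≤ 0.7 := by nlinarith
    have hpow : x ^ (n + 1) ≤ (0.7 : ℝ) ^ (n + 1) :=
      pow_le_pow_left₀ (le_of_lt hx0) hx7 _
    have hpow2 : (0.7 : ℝ) ^ (n + 1) ≤ 2 * (0.7 : ℝ) ^ n := by
      rw [pow_succ]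
      nlinarith [pow_pos (by norm_num : (0:ℝ) < 0.7) n]
    constructor
    · linarith
    · rw [hxval]; linarith
  have hlow : ∀ᶠ n in atTop, 1 / 2 ≤ c n :=
    eventually_atTop.2 ⟨2, fun n hn => (key n hn).1⟩
  have hhigh : ∀ᶠ n in atTop, c n ≤ 1 / 2 + (0.7 : ℝ) ^ n :=
    eventually_atTop.2 ⟨2, fun n hn => (key n hn).2⟩
  have h1 : Tendsto (fun _ : ℕ => (1 / 2 : ℝ)) atTop (nhds (1 / 2)) := tendsto_const_nhds
  have h2 : Tendsto (fun n : ℕ => 1 / 2 + (0.7 : ℝ) ^ n) atTop (nhds (1 / 2)) := by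
    have := tendsto_pow_atTop_nhds_zero_of_lt_one (by norm_num : (0:ℝ) ≤ 0.7)
      (by norm_num : (0.7:ℝ) < 1)
    simpa using (tendsto_const_nhds (x := (1/2 : ℝ)) (f := atTop)).add this
  exact tendsto_of_tendsto_of_tendsto_of_le_of_le' h1 h2 hlow hhigh
end

section
/- For every integer g ≥ 3, the sequence (A_t)_{t≥1} is strictly increasing, and the ratio A_{t+1}/A_t converges as t → ∞ to r_g, the unique real root in (1, 2) of r^g − 2r^{g−1} + 1. -/
open Filter Finset

lemma aux_contract (α : ℝ) (hα0 : 0 ≤ α) (hα1 : α < 1) (x δ : ℕ → ℝ)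
    (h : ∀ t, x (t+1) = α * x t + δ t) (hδ : Tendsto δ atTop (nhds 0)) :
    Tendsto x atTop (nhds 0) := by
  rw [Metric.tendsto_atTop] at hδ ⊢
  intro ε hε
  obtain ⟨N, hN⟩ := hδ (ε * (1 - α) / 2) (by nlinarith)
  have hbd : ∀ m, |x (N + m)| ≤ α ^ m * |x N| + ε / 2 := by
    intro m
    induction m with
    | zero => simp; nlinarith [abs_nonneg (x N)]
    | succ m ih =>
      have h1 : |x (N + m + 1)| ≤ α * |x (N + m)| + |δ (N + m)| := by
        rw [h (N + m)]
        calc |α * x (N + m) + δ (N + m)| ≤ |α * x (N + m)| + |δ (N + m)| := abs_add_le _ _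
        _ = α * |x (N + m)| + |δ (N + m)| := by rw [abs_mul, abs_of_nonneg hα0]
      have h2 : |δ (N + m)| < ε * (1 - α) / 2 := by
        have := hN (N + m) (by omega)
        simpa [Real.dist_eq] using this
      have : N + (m + 1) = N + m + 1 := by omega
      rw [this]
      calc |x (N + m + 1)| ≤ α * (α ^ m * |x N| + ε / 2) + ε * (1 - α) / 2 := by
            nlinarith
        _ = α ^ (m + 1) * |x N| + (α * ε / 2 + ε * (1 - α) / 2) := by ring
        _ ≤ α ^ (m + 1) * |x N| + ε / 2 := by nlinarith
  have hpow : Tendsto (fun m => α ^ m * |x N|) atTop (nhds 0) := by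
    simpa using (tendsto_pow_atTop_nhds_zero_of_lt_one hα0 hα1).mul_const |x N|
  rw [Metric.tendsto_atTop] at hpow
  obtain ⟨M, hM⟩ := hpow (ε / 2) (by linarith)
  refine ⟨N + M, fun t ht => ?_⟩
  have : t = N + (t - N) := by omega
  rw [Real.dist_eq, sub_zero, this]
  have h1 := hbd (t - N)
  have h2 := hM (t - N) (by omega)
  rw [Real.dist_eq, sub_zero] at h2
  have h3 : α ^ (t - N) * |x N| < ε / 2 := lt_of_abs_lt h2
  linarith

lemma key_conv (k : ℕ) (hk : 2 ≤ k) (w : ℝ) (hw0 : 0 < w) (hw1 : w < 1)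
    (d : ℕ → ℝ) (hd : ∀ t, 0 < d t)
    (hsum : ∑ j ∈ Finset.range k, w ^ (k - j) = 1)
    (hrec : ∀ t, 1 ≤ t → d (t + k) = ∑ j ∈ Finset.range k, w ^ (k - j) * d (t + j)) :
    ∃ ℓ : ℝ, 0 < ℓ ∧ Tendsto d atTop (nhds ℓ) := by
  have hne : (Finset.range k).Nonempty := ⟨0, Finset.mem_range.2 (by omega)⟩
  set M : ℕ → ℝ := fun t => (Finset.range k).sup' hne (fun j => d (t + j)) with hMdef
  set m : ℕ → ℝ := fun t => (Finset.range k).inf' hne (fun j => d (t + j)) with hmdef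
  have hmem_le : ∀ t j, j < k → d (t + j) ≤ M t := by
    intro t j hj; simp only [hMdef]; exact Finset.le_sup' (fun j => d (t + j)) (Finset.mem_range.2 hj)
  have hmem_ge : ∀ t j, j < k → m t ≤ d (t + j) := by
    intro t j hj; simp only [hmdef]; exact Finset.inf'_le (fun j => d (t + j)) (Finset.mem_range.2 hj)
  have hMle : ∀ t (b : ℝ), (∀ j, j < k → d (t + j) ≤ b) → M t ≤ b := by
    intro t b hb; simp only [hMdef]
    exact Finset.sup'_le _ _ (fun j hj => hb j (Finset.mem_range.1 hj))
  have hmge : ∀ t (b : ℝ), (∀ j, j < k → b ≤ d (t + j)) → b ≤ m t := by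
    intro t b hb; simp only [hmdef]
    exact Finset.le_inf' _ _ (fun j hj => hb j (Finset.mem_range.1 hj))
  have hmex : ∀ t, ∃ j, j < k ∧ m t = d (t + j) := by
    intro t
    obtain ⟨j, hj, hjeq⟩ := Finset.exists_mem_eq_inf' hne (fun j => d (t + j))
    refine ⟨j, Finset.mem_range.1 hj, ?_⟩
    simp only [hmdef]; exact hjeq
  have hmM : ∀ t, m t ≤ M t := fun t =>
    le_trans (hmem_ge t 0 (by omega)) (hmem_le t 0 (by omega))
  -- all later values stay in the window's interval
  have hU : ∀ t, 1 ≤ t → ∀ s, t ≤ s → m t ≤ d s ∧ d s ≤ M t := by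
    intro t ht s
    induction s using Nat.strong_induction_on with
    | _ s ih =>
      intro hts
      rcases lt_or_ge s (t + k) with hs | hs
      · obtain ⟨j, hj, rfl⟩ : ∃ j, j < k ∧ s = t + j := ⟨s - t, by omega, by omega⟩
        exact ⟨hmem_ge t j hj, hmem_le t j hj⟩
      · obtain ⟨t', rfl⟩ : ∃ t', s = t' + k := ⟨s - k, by omega⟩
        have ht' : 1 ≤ t' := by omega
        rw [hrec t' ht']
        constructor
        · have h1 : ∑ j ∈ Finset.range k, w ^ (k - j) * m t = m t := by
            rw [← Finset.sum_mul, hsum, one_mul]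
          rw [← h1]
          apply Finset.sum_le_sum
          intro j hj
          have hj' := Finset.mem_range.1 hj
          exact mul_le_mul_of_nonneg_left
            ((ih (t' + j) (by omega) (by omega)).1) (pow_pos hw0 _).le
        · have h1 : ∑ j ∈ Finset.range k, w ^ (k - j) * M t = M t := by
            rw [← Finset.sum_mul, hsum, one_mul]
          rw [← h1]
          apply Finset.sum_le_sum
          intro j hj
          have hj' := Finset.mem_range.1 hj
          exact mul_le_mul_of_nonneg_left
            ((ih (t' + j) (by omega) (by omega)).2) (pow_pos hw0 _).le
  -- one-step improvement
  have hB : ∀ t, 1 ≤ t → ∀ (Mb c : ℝ), 0 ≤ c →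
      (∀ j, j < k → d (t + j) ≤ Mb) → (∃ j, j < k ∧ d (t + j) ≤ Mb - c) →
      d (t + k) ≤ Mb - w ^ k * c := by
    rintro t ht Mb c hc hall ⟨j₀, hj₀, hj₀le⟩
    have hj₀' : j₀ ∈ Finset.range k := Finset.mem_range.2 hj₀
    rw [hrec t ht, ← Finset.add_sum_erase _ (fun j => w ^ (k - j) * d (t + j)) hj₀']
    have hsum' : w ^ (k - j₀) + ∑ j ∈ (Finset.range k).erase j₀, w ^ (k - j) = 1 := by
      rw [Finset.add_sum_erase _ (fun j => w ^ (k - j)) hj₀']; exact hsum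
    have h2 : ∑ j ∈ (Finset.range k).erase j₀, w ^ (k - j) * d (t + j)
        ≤ (∑ j ∈ (Finset.range k).erase j₀, w ^ (k - j)) * Mb := by
      rw [Finset.sum_mul]
      apply Finset.sum_le_sum
      intro j hj
      exact mul_le_mul_of_nonneg_left
        (hall j (Finset.mem_range.1 (Finset.mem_of_mem_erase hj))) (pow_pos hw0 _).le
    have h3 : w ^ k ≤ w ^ (k - j₀) := pow_le_pow_of_le_one hw0.le hw1.le (Nat.sub_le k j₀)
    have h4 : w ^ (k - j₀) * d (t + j₀) ≤ w ^ (k - j₀) * Mb - w ^ (k - j₀) * c := by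
      have := mul_le_mul_of_nonneg_left hj₀le (pow_pos hw0 (k - j₀)).le
      rw [mul_sub] at this
      linarith
    have h5 : w ^ (k - j₀) * Mb + (∑ j ∈ (Finset.range k).erase j₀, w ^ (k - j)) * Mb = Mb := by
      rw [← add_mul, hsum', one_mul]
    have h6 : w ^ k * c ≤ w ^ (k - j₀) * c := mul_le_mul_of_nonneg_right h3 hc
    linarith
  -- cascading improvement
  have hC : ∀ t, 1 ≤ t → ∀ i, i < k →
      d (t + k + i) ≤ M t - (w ^ k) ^ (i + 1) * (M t - m t) := by
    intro t ht i
    induction i with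
    | zero =>
      intro _
      obtain ⟨j₀, hj₀, hj₀eq⟩ := hmex t
      have := hB t ht (M t) (M t - m t) (by linarith [hmM t]) (fun j hj => hmem_le t j hj)
        ⟨j₀, hj₀, by rw [← hj₀eq]; linarith [hmM t]⟩
      simpa using this
    | succ i ih =>
      intro hik
      have ih' := ih (by omega)
      have hstep := hB (t + i + 1) (by omega) (M t) ((w ^ k) ^ (i + 1) * (M t - m t))
        (mul_nonneg (pow_nonneg (pow_nonneg hw0.le k) _) (by linarith [hmM t]))
        (fun j hj => (hU t ht (t + i + 1 + j) (by omega)).2)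
        ⟨k - 1, by omega, by
          have heq : t + i + 1 + (k - 1) = t + k + i := by omega
          rw [heq]; exact ih'⟩
      have heq : t + i + 1 + k = t + k + (i + 1) := by omega
      rw [heq] at hstep
      calc d (t + k + (i + 1)) ≤ M t - w ^ k * ((w ^ k) ^ (i + 1) * (M t - m t)) := hstep
        _ = M t - (w ^ k) ^ (i + 1 + 1) * (M t - m t) := by ring
  have hMmono : ∀ t, 1 ≤ t → ∀ s, t ≤ s → M s ≤ M t ∧ m t ≤ m s := by
    intro t ht s hts
    constructor
    · exact hMle s (M t) (fun j hj => (hU t ht (s + j) (by omega)).2)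
    · exact hmge s (m t) (fun j hj => (hU t ht (s + j) (by omega)).1)
  set ρ : ℝ := 1 - (w ^ k) ^ k with hρdef
  have hwk1 : (w ^ k) ^ k ≤ 1 := pow_le_one₀ (pow_nonneg hw0.le k) (pow_le_one₀ hw0.le hw1.le)
  have hwk0 : 0 < (w ^ k) ^ k := pow_pos (pow_pos hw0 k) k
  have hρ0 : 0 ≤ ρ := by simp [hρdef]; linarith
  have hρ1 : ρ < 1 := by simp [hρdef]; linarith
  have hcontr : ∀ t, 1 ≤ t → M (t + k) - m (t + k) ≤ ρ * (M t - m t) := by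
    intro t ht
    have h1 : M (t + k) ≤ M t - (w ^ k) ^ k * (M t - m t) := by
      apply hMle
      intro j hj
      have hCj := hC t ht j hj
      have hle : (w ^ k) ^ k ≤ (w ^ k) ^ (j + 1) :=
        pow_le_pow_of_le_one (pow_nonneg hw0.le k) (pow_le_one₀ hw0.le hw1.le) (by omega)
      nlinarith [sub_nonneg.2 (hmM t)]
    have h2 : m t ≤ m (t + k) := (hMmono t ht (t + k) (by omega)).2
    simp only [hρdef]
    nlinarith
  have hgeo : ∀ n, M (1 + n * k) - m (1 + n * k) ≤ ρ ^ n * (M 1 - m 1) := by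
    intro n
    induction n with
    | zero => simp
    | succ n ih =>
      have heq : 1 + (n + 1) * k = (1 + n * k) + k := by ring
      rw [heq]
      calc M (1 + n * k + k) - m (1 + n * k + k) ≤ ρ * (M (1 + n * k) - m (1 + n * k)) :=
            hcontr (1 + n * k) (by omega)
        _ ≤ ρ * (ρ ^ n * (M 1 - m 1)) := mul_le_mul_of_nonneg_left ih hρ0
        _ = ρ ^ (n + 1) * (M 1 - m 1) := by ring
  have hΔtend : Tendsto (fun n => M (n + 1) - m (n + 1)) atTop (nhds 0) := by
    rw [Metric.tendsto_atTop]
    intro ε hε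
    have hpow : Tendsto (fun n => ρ ^ n * (M 1 - m 1)) atTop (nhds 0) := by
      simpa using (tendsto_pow_atTop_nhds_zero_of_lt_one hρ0 hρ1).mul_const (M 1 - m 1)
    obtain ⟨n₀, hn₀⟩ := (Metric.tendsto_atTop.1 hpow) ε hε
    refine ⟨n₀ * k, fun t ht => ?_⟩
    have h1 : M (t + 1) - m (t + 1) ≤ M (1 + n₀ * k) - m (1 + n₀ * k) := by
      have := hMmono (1 + n₀ * k) (by omega) (t + 1) (by omega)
      linarith [this.1, this.2]
    have h3 := hn₀ n₀ le_rfl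
    rw [Real.dist_eq, sub_zero] at h3
    have h4 := lt_of_abs_lt h3
    rw [Real.dist_eq, sub_zero, abs_of_nonneg (sub_nonneg.2 (hmM (t + 1)))]
    calc M (t + 1) - m (t + 1) ≤ M (1 + n₀ * k) - m (1 + n₀ * k) := h1
      _ ≤ ρ ^ n₀ * (M 1 - m 1) := hgeo n₀
      _ < ε := h4
  have hmono : Monotone (fun n => m (n + 1)) := fun a b hab =>
    (hMmono (a + 1) (by omega) (b + 1) (by omega)).2
  have hbdd : BddAbove (Set.range fun n => m (n + 1)) := by
    refine ⟨M 1, ?_⟩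
    rintro x ⟨n, rfl⟩
    calc m (n + 1) ≤ M (n + 1) := hmM _
      _ ≤ M 1 := (hMmono 1 le_rfl (n + 1) (by omega)).1
  have hmtend : Tendsto (fun n => m (n + 1)) atTop (nhds (⨆ n, m (n + 1))) :=
    tendsto_atTop_ciSup hmono hbdd
  refine ⟨⨆ n, m (n + 1), ?_, ?_⟩
  · have hm1 : 0 < m 1 := by
      obtain ⟨j, hj, hjeq⟩ := hmex 1
      rw [hjeq]; exact hd _
    calc (0 : ℝ) < m 1 := hm1
      _ = (fun n => m (n + 1)) 0 := rfl
      _ ≤ ⨆ n, m (n + 1) := le_ciSup hbdd 0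
  · have hMtend : Tendsto (fun n => M (n + 1)) atTop (nhds (⨆ n, m (n + 1))) := by
      have heq : (fun n => M (n + 1)) = fun n => (M (n + 1) - m (n + 1)) + m (n + 1) := by
        funext n; ring
      rw [heq]
      simpa using hΔtend.add hmtend
    have hdseq : Tendsto (fun n => d (n + 1)) atTop (nhds (⨆ n, m (n + 1))) := by
      refine tendsto_of_tendsto_of_tendsto_of_le_of_le hmtend hMtend ?_ ?_
      · intro n; simpa using hmem_ge (n + 1) 0 (by omega)
      · intro n; simpa using hmem_le (n + 1) 0 (by omega)
    exact (tendsto_add_atTop_iff_nat 1).1 hdseq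

/-- For every integer `g ≥ 3`, the ancestor-count sequence `(A t)` for `t ≥ 1` is
strictly increasing, and the ratio `A (t+1) / A t` converges as `t → ∞` to `r`,
the unique real root in `(1, 2)` of `r^g − 2r^{g−1} + 1`. -/
theorem A_increasing_ratio_tendsto (g : ℕ) (hg : 3 ≤ g) (A : ℕ → ℤ)
    (hA₁ : ∀ t, t ≤ g → A t = 2 ^ t)
    (hA₂ : ∀ t, g + 1 ≤ t → A t = 2 * A (t - 1) - A (t - g))
    (r : ℝ) (hr : r ∈ Set.Ioo (1 : ℝ) 2)
    (hroot : r ^ g - 2 * r ^ (g - 1) + 1 = 0) :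
    (∀ t, 1 ≤ t → A t < A (t + 1)) ∧
    Tendsto (fun t : ℕ => (A (t + 1) : ℝ) / (A t : ℝ)) atTop (nhds r) := by
  obtain ⟨hr1, hr2⟩ := hr
  have hrpos : (0:ℝ) < r := by linarith
  have hrne : r ≠ 0 := ne_of_gt hrpos
  set k := g - 1 with hkdef
  have hk : 2 ≤ k := by omega
  have hgk : g = k + 1 := by omega
  rw [hgk] at hroot
  have hroot' : r ^ (k + 1) - 2 * r ^ k + 1 = 0 := hroot
  -- the difference sequence
  set D : ℕ → ℤ := fun t => A (t + 1) - A t with hDdef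
  have hD1 : ∀ t, t < g → D t = 2 ^ t := by
    intro t htg
    simp only [hDdef]
    rw [hA₁ t (by omega), hA₁ (t+1) (by omega)]
    ring
  have hDrec : ∀ t, 1 ≤ t → D (t + k) = ∑ j ∈ Finset.range k, D (t + j) := by
    intro t ht
    have h1 : A (t + k + 1) = 2 * A (t + k) - A t := by
      have h := hA₂ (t + k + 1) (by omega)
      have e1 : t + k + 1 - 1 = t + k := by omega
      have e2 : t + k + 1 - g = t := by omega
      rw [e1, e2] at h
      exact h
    have h2 : ∑ j ∈ Finset.range k, D (t + j) = A (t + k) - A t := by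
      have hsum := Finset.sum_range_sub (fun j => A (t + j)) k
      simp only [Nat.add_zero] at hsum
      rw [← hsum]
      apply Finset.sum_congr rfl
      intro j hj
      simp only [hDdef]
      rfl
    rw [h2]
    simp only [hDdef]
    rw [h1]
    ring
  have hDpos : ∀ t, 0 < D t := by
    intro t
    induction t using Nat.strong_induction_on with
    | _ t ih =>
      rcases lt_or_ge t g with h | h
      · rw [hD1 t h]; positivity
      · obtain ⟨t', rfl⟩ : ∃ t', t = t' + k := ⟨t - k, by omega⟩
        rw [hDrec t' (by omega)]
        apply Finset.sum_pos
        · intro j hj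
          exact ih (t' + j) (by have := Finset.mem_range.1 hj; omega)
        · exact ⟨0, Finset.mem_range.2 (by omega)⟩
  have hApos : ∀ t, 0 < A t := by
    intro t
    induction t with
    | zero => rw [hA₁ 0 (by omega)]; norm_num
    | succ n ih =>
      have h := hDpos n
      simp only [hDdef] at h
      linarith
  have part1 : ∀ t, 1 ≤ t → A t < A (t + 1) := by
    intro t _
    have h := hDpos t
    simp only [hDdef] at h
    linarith
  refine ⟨part1, ?_⟩
  -- real normalized differences
  set d : ℕ → ℝ := fun t => (D t : ℝ) / r ^ t with hddef
  have hdpos : ∀ t, 0 < d t := by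
    intro t
    simp only [hddef]
    exact div_pos (by exact_mod_cast hDpos t) (pow_pos hrpos t)
  have hw0 : 0 < r⁻¹ := inv_pos.2 hrpos
  have hw1 : r⁻¹ < 1 := by
    have h : r⁻¹ * r = 1 := inv_mul_cancel₀ hrne
    nlinarith
  have hne1 : r⁻¹ ≠ 1 := ne_of_lt hw1
  have hS : ∑ j ∈ Finset.range k, (r⁻¹) ^ (j + 1) = 1 := by
    have h1 : ∑ j ∈ Finset.range k, (r⁻¹) ^ (j + 1)
        = ((r⁻¹) ^ k - 1) / (r⁻¹ - 1) * r⁻¹ := by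
      rw [← geom_sum_eq hne1, Finset.sum_mul]
      apply Finset.sum_congr rfl
      intro j _
      rw [pow_succ]
    rw [h1, inv_pow]
    rw [div_mul_eq_mul_div, div_eq_one_iff_eq (by intro hc; rw [sub_eq_zero] at hc; exact hne1 hc)]
    have hrk : r ^ k ≠ 0 := pow_ne_zero _ hrne
    field_simp
    linear_combination hroot' 
  have hsum : ∑ j ∈ Finset.range k, (r⁻¹) ^ (k - j) = 1 := by
    have h0 := Finset.sum_range_reflect (fun i => (r⁻¹) ^ (i + 1)) k
    rw [← hS, ← h0]
    apply Finset.sum_congr rfl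
    intro j hj
    have hjk := Finset.mem_range.1 hj
    congr 1
    omega
  have hdrec : ∀ t, 1 ≤ t → d (t + k) = ∑ j ∈ Finset.range k, (r⁻¹) ^ (k - j) * d (t + j) := by
    intro t ht
    simp only [hddef]
    rw [hDrec t ht]
    push_cast
    rw [Finset.sum_div]
    apply Finset.sum_congr rfl
    intro j hj
    have hjk : j < k := Finset.mem_range.1 hj
    have hpow : r ^ (t + k) = r ^ (k - j) * r ^ (t + j) := by
      rw [← pow_add]; congr 1; omega
    rw [hpow, inv_pow]
    have h1 : r ^ (k - j) ≠ 0 := pow_ne_zero _ hrne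
    have h2 : r ^ (t + j) ≠ 0 := pow_ne_zero _ hrne
    field_simp
  obtain ⟨ℓ, hℓpos, hdt⟩ := key_conv k hk r⁻¹ hw0 hw1 d hdpos hsum hdrec
  -- normalized A
  set a : ℕ → ℝ := fun t => (A t : ℝ) / r ^ t with hadef
  set L : ℝ := ℓ / (r - 1) with hLdef
  have hLpos : 0 < L := div_pos hℓpos (by linarith)
  have hx : ∀ t, a (t + 1) - L = r⁻¹ * (a t - L) + r⁻¹ * (d t - ℓ) := by
    intro t
    have hAstep : (A (t + 1) : ℝ) = (A t : ℝ) + (D t : ℝ) := by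
      simp only [hDdef]; push_cast; ring
    simp only [hadef, hddef, hLdef]
    rw [hAstep]
    have h2 : r ^ (t + 1) ≠ 0 := pow_ne_zero _ hrne
    have h3 : r ^ t ≠ 0 := pow_ne_zero _ hrne
    have h4 : r - 1 ≠ 0 := by intro hc; rw [sub_eq_zero] at hc; linarith
    field_simp
    ring
  have hδ : Tendsto (fun t => r⁻¹ * (d t - ℓ)) atTop (nhds 0) := by
    have h := (hdt.sub_const ℓ).const_mul r⁻¹
    simpa using h
  have hxt := aux_contract r⁻¹ hw0.le hw1 (fun t => a t - L) (fun t => r⁻¹ * (d t - ℓ)) hx hδ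
  have hat : Tendsto a atTop (nhds L) := by
    have heq : a = fun t => (a t - L) + L := by funext t; ring
    rw [heq]
    simpa using hxt.add_const L
  have haS : Tendsto (fun t => a (t + 1)) atTop (nhds L) := (tendsto_add_atTop_iff_nat 1).2 hat
  have hratio : Tendsto (fun t => a (t + 1) / a t) atTop (nhds 1) := by
    have h := haS.div hat hLpos.ne'
    rw [div_self hLpos.ne'] at h; exact h
  have heq : ∀ t, (A (t + 1) : ℝ) / (A t : ℝ) = r * (a (t + 1) / a t) := by
    intro t
    simp only [hadef]
    have hA0 : (A t : ℝ) ≠ 0 := by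
      have := hApos t
      exact_mod_cast this.ne'
    have hA1 : (A (t + 1) : ℝ) ≠ 0 := by
      have := hApos (t + 1)
      exact_mod_cast this.ne'
    have h2 : r ^ (t + 1) ≠ 0 := pow_ne_zero _ hrne
    have h3 : r ^ t ≠ 0 := pow_ne_zero _ hrne
    field_simp
    ring
  have hfin : Tendsto (fun t => r * (a (t + 1) / a t)) atTop (nhds (r * 1)) := hratio.const_mul r
  rw [mul_one] at hfin
  exact hfin.congr (fun t => (heq t).symm)
end
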